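/- arXiv:1801.07953 — 2 statements merged into one kernel-verified Lean document; each statement's English description precedes it below -/
import Mathlib

section
/- Let n, m ∈ ℕ and let A₁,…,Aₘ, B₁,…,Bₘ, X be n×n complex matrices. Then ‖Σ_{j=1}^m Aⱼᴴ X Bⱼ‖_F ≤ ‖Σ_{j=1}^m Bⱼᴴ Bⱼ‖_op^{1/2} · ‖(Σ_{j=1}^m Aⱼ Aⱼᴴ)^{1/2} · X‖_F. -/
open Matrix
open scoped ComplexOrder

/-- The Frobenius (Hilbert–Schmidt) norm of a complex matrix. -/
noncomputable def frobeniusNorm {n : ℕ} (M : Matrix (Fin n) (Fin n) ℂ) : ℝ :=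
  Real.sqrt (∑ i, ∑ j, ‖M i j‖ ^ 2)

/-- The ℓ²→ℓ² operator norm of a complex matrix. -/
noncomputable def l2OpNorm {n : ℕ} (M : Matrix (Fin n) (Fin n) ℂ) : ℝ :=
  ‖(Matrix.toEuclideanCLM (𝕜 := ℂ) M : EuclideanSpace ℂ (Fin n) →L[ℂ] EuclideanSpace ℂ (Fin n))‖

/-- The positive semidefinite square root of a positive semidefinite matrix
(the definition `Matrix.PosSemidef.sqrt` of the older Mathlib, since removed). -/
noncomputable def Matrix.PosSemidef.sqrt {n : Type*} [Fintype n] [DecidableEq n] {𝕜 : Type*} [RCLike 𝕜]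
    {A : Matrix n n 𝕜} (hA : A.PosSemidef) : Matrix n n 𝕜 :=
  hA.1.eigenvectorUnitary.1 * diagonal ((↑) ∘ (√·) ∘ hA.1.eigenvalues) *
  (star hA.1.eigenvectorUnitary : Matrix n n 𝕜)

/-- A sum of matrices of the form `A Aᴴ` is positive semidefinite. -/
lemma posSemidef_sum_mul_conjTranspose {n m : ℕ} (A : Fin m → Matrix (Fin n) (Fin n) ℂ) :
    (∑ j, A j * (A j)ᴴ).PosSemidef := by
  apply Finset.sum_induction
  · exact fun a b ha hb => ha.add hb
  · exact Matrix.PosSemidef.zero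
  · exact fun i _ => Matrix.posSemidef_self_mul_conjTranspose (A i)

namespace CSAux

variable {n m : ℕ}

/-- Square of the Frobenius norm. -/
noncomputable def N2 (M : Matrix (Fin n) (Fin n) ℂ) : ℝ := ∑ i, ∑ j, ‖M i j‖ ^ 2

lemma frob_eq (M : Matrix (Fin n) (Fin n) ℂ) : frobeniusNorm M = Real.sqrt (N2 M) := rfl

lemma N2_nonneg (M : Matrix (Fin n) (Fin n) ℂ) : 0 ≤ N2 M :=
  Finset.sum_nonneg fun _ _ => Finset.sum_nonneg fun _ _ => sq_nonneg _

/-- The (complex) Frobenius inner product. -/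
noncomputable def IP (M N : Matrix (Fin n) (Fin n) ℂ) : ℂ := (Mᴴ * N).trace

lemma N2_eq_re_IP (M : Matrix (Fin n) (Fin n) ℂ) : N2 M = (IP M M).re := by
  simp only [N2, IP, Matrix.trace, Matrix.diag, Matrix.mul_apply,
    Matrix.conjTranspose_apply, Complex.re_sum]
  rw [Finset.sum_comm]
  simp [Complex.star_def, mul_comm, Complex.mul_conj, Complex.sq_norm]

lemma IP_sum_right (M : Matrix (Fin n) (Fin n) ℂ) (W : Fin m → Matrix (Fin n) (Fin n) ℂ) :
    IP M (∑ j, W j) = ∑ j, IP M (W j) := by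
  simp [IP, Matrix.mul_sum]

lemma IP_shift (Z A X B : Matrix (Fin n) (Fin n) ℂ) :
    IP Z (Aᴴ * X * B) = IP (Z * Bᴴ) (Aᴴ * X) := by
  simp only [IP, conjTranspose_mul, conjTranspose_conjTranspose]
  rw [show Zᴴ * (Aᴴ * X * B) = (Zᴴ * (Aᴴ * X)) * B by rw [← mul_assoc, ← mul_assoc],
    Matrix.trace_mul_comm, mul_assoc]

lemma cs_sum {ι : Type*} [Fintype ι] (f g : ι → ℝ) (hf : ∀ i, 0 ≤ f i) (hg : ∀ i, 0 ≤ g i) :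
    ∑ i, f i * g i ≤ Real.sqrt (∑ i, f i ^ 2) * Real.sqrt (∑ i, g i ^ 2) := by
  have h := Finset.sum_mul_sq_le_sq_mul_sq Finset.univ f g
  have h0 : 0 ≤ ∑ i, f i * g i := Finset.sum_nonneg fun i _ => mul_nonneg (hf i) (hg i)
  calc ∑ i, f i * g i = Real.sqrt ((∑ i, f i * g i) ^ 2) := (Real.sqrt_sq h0).symm
    _ ≤ Real.sqrt ((∑ i, f i ^ 2) * ∑ i, g i ^ 2) := Real.sqrt_le_sqrt h
    _ = _ := Real.sqrt_mul (Finset.sum_nonneg fun i _ => sq_nonneg _) _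

lemma re_IP_le (M N : Matrix (Fin n) (Fin n) ℂ) :
    (IP M N).re ≤ ∑ i, ∑ k, ‖M i k‖ * ‖N i k‖ := by
  rw [IP, Matrix.trace]
  simp only [Matrix.diag, Matrix.mul_apply, Matrix.conjTranspose_apply, Complex.re_sum]
  rw [Finset.sum_comm]
  refine Finset.sum_le_sum fun i _ => Finset.sum_le_sum fun k _ => ?_
  refine le_trans (Complex.re_le_norm _) ?_
  rw [norm_mul, norm_star]

lemma sum_re_IP_le (U V : Fin m → Matrix (Fin n) (Fin n) ℂ) :
    ∑ j, (IP (U j) (V j)).re ≤ Real.sqrt (∑ j, N2 (U j)) * Real.sqrt (∑ j, N2 (V j)) := by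
  have h1 : ∑ j, (IP (U j) (V j)).re ≤ ∑ j, ∑ i, ∑ k, ‖U j i k‖ * ‖V j i k‖ :=
    Finset.sum_le_sum fun j _ => re_IP_le _ _
  refine h1.trans ?_
  have h2 := cs_sum (ι := Fin m × Fin n × Fin n) (fun p => ‖U p.1 p.2.1 p.2.2‖)
    (fun p => ‖V p.1 p.2.1 p.2.2‖) (fun _ => norm_nonneg _) (fun _ => norm_nonneg _)
  simpa [Fintype.sum_prod_type, N2] using h2

lemma sqrt_herm {A : Matrix (Fin n) (Fin n) ℂ} (hA : A.PosSemidef) : hA.sqrtᴴ = hA.sqrt := by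
  unfold Matrix.PosSemidef.sqrt
  have hd : star (diagonal (RCLike.ofReal ∘ (√·) ∘ hA.1.eigenvalues : Fin n → ℂ)) =
      diagonal (RCLike.ofReal ∘ (√·) ∘ hA.1.eigenvalues) := by
    rw [star_eq_conjTranspose, diagonal_conjTranspose]; congr 1; funext i; simp
  rw [← star_eq_conjTranspose, star_mul, star_mul, star_star, hd, ← Matrix.mul_assoc]
lemma sqrt_mul_self' {A : Matrix (Fin n) (Fin n) ℂ} (hA : A.PosSemidef) : hA.sqrt * hA.sqrt = A := by
  unfold Matrix.PosSemidef.sqrt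
  have hU : (star hA.1.eigenvectorUnitary : Matrix (Fin n) (Fin n) ℂ) * hA.1.eigenvectorUnitary.1 = 1 :=
    Unitary.coe_star_mul_self _
  have hD : diagonal (((↑) ∘ (√·) ∘ hA.1.eigenvalues : Fin n → ℂ)) * diagonal ((↑) ∘ (√·) ∘ hA.1.eigenvalues)
      = diagonal (RCLike.ofReal ∘ hA.1.eigenvalues) := by
    rw [diagonal_mul_diagonal]
    congr 1; funext i
    simp only [Function.comp_apply]
    rw [← Complex.ofReal_mul, Real.mul_self_sqrt (hA.eigenvalues_nonneg i)]
    rfl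
  conv_rhs => rw [hA.1.spectral_theorem, Unitary.conjStarAlgAut_apply]
  rw [← hD]
  simp only [Matrix.mul_assoc]
  rw [← Matrix.mul_assoc (star _ : Matrix (Fin n) (Fin n) ℂ) _ (diagonal _ * _), hU, Matrix.one_mul]
  rfl

lemma sum_N2_left (A : Fin m → Matrix (Fin n) (Fin n) ℂ) (X : Matrix (Fin n) (Fin n) ℂ) :
    ∑ j, N2 ((A j)ᴴ * X) = N2 ((posSemidef_sum_mul_conjTranspose A).sqrt * X) := by
  have hS := posSemidef_sum_mul_conjTranspose A
  have h1 : ∀ j : Fin m, IP ((A j)ᴴ * X) ((A j)ᴴ * X) = (Xᴴ * ((A j * (A j)ᴴ) * X)).trace := by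
    intro j
    unfold IP
    congr 1
    simp [Matrix.conjTranspose_mul, Matrix.mul_assoc]
  have h2 : IP (hS.sqrt * X) (hS.sqrt * X) = (Xᴴ * ((∑ j, A j * (A j)ᴴ) * X)).trace := by
    unfold IP
    congr 1
    rw [conjTranspose_mul, sqrt_herm hS]
    rw [mul_assoc, ← mul_assoc hS.sqrt, sqrt_mul_self' hS]
  have h : ∑ j, IP ((A j)ᴴ * X) ((A j)ᴴ * X) = IP (hS.sqrt * X) (hS.sqrt * X) := by
    simp only [h1, h2, ← Matrix.trace_sum, ← Matrix.mul_sum, ← Matrix.sum_mul]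
  simp only [N2_eq_re_IP, ← Complex.re_sum, h]

lemma norm_row_eq (Z C : Matrix (Fin n) (Fin n) ℂ) (i k : Fin n) :
    ‖(Z * Cᴴ) i k‖ = ‖(C *ᵥ star (Z i)) k‖ := by
  have h : (C *ᵥ star (Z i)) k = star ((Z * Cᴴ) i k) := by
    simp [Matrix.mulVec, dotProduct, Matrix.mul_apply, Matrix.conjTranspose_apply,
      star_sum, mul_comm]
  rw [h, norm_star]

lemma sum_N2_right (Z : Matrix (Fin n) (Fin n) ℂ) (B : Fin m → Matrix (Fin n) (Fin n) ℂ) :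
    ∑ j, N2 (Z * (B j)ᴴ) ≤ l2OpNorm (∑ j, (B j)ᴴ * B j) * N2 Z := by
  classical
  set T := ∑ j, (B j)ᴴ * B j with hT
  set L := toEuclideanCLM (𝕜 := ℂ) T with hL
  set v : Fin n → EuclideanSpace ℂ (Fin n) :=
    fun i => (WithLp.equiv 2 (Fin n → ℂ)).symm (star (Z i)) with hv
  have hnormv : ∀ i, ‖v i‖ ^ 2 = ∑ k, ‖Z i k‖ ^ 2 := by
    intro i
    rw [EuclideanSpace.norm_eq, Real.sq_sqrt (by positivity)]
    simp [hv]
  have key : ∀ i, ∑ j, ∑ k, ‖(Z * (B j)ᴴ) i k‖ ^ 2 ≤ l2OpNorm T * ∑ k, ‖Z i k‖ ^ 2 := by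
    intro i
    have h1 : ∀ j, ∑ k, ‖(Z * (B j)ᴴ) i k‖ ^ 2 =
        ‖toEuclideanCLM (𝕜 := ℂ) (B j) (v i)‖ ^ 2 := by
      intro j
      rw [hv, WithLp.equiv_symm_apply, toEuclideanCLM_toLp, EuclideanSpace.norm_eq,
        Real.sq_sqrt (by positivity)]
      refine Finset.sum_congr rfl fun k _ => ?_
      have h : (WithLp.toLp 2 (B j *ᵥ star (Z i))) k =
          (B j *ᵥ star (Z i)) k := by
        simp [Matrix.toLin'_apply]
      rw [h, ← norm_row_eq]
    have h2 : ∑ j, ‖toEuclideanCLM (𝕜 := ℂ) (B j) (v i)‖ ^ 2 =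
        ((inner ℂ (v i) (L (v i)) : ℂ)).re := by
      rw [hL, hT, map_sum, ContinuousLinearMap.sum_apply, inner_sum, Complex.re_sum]
      refine Finset.sum_congr rfl fun j _ => ?_
      rw [← Matrix.star_eq_conjTranspose, _root_.map_mul, map_star, ContinuousLinearMap.mul_apply,
        ContinuousLinearMap.star_eq_adjoint, ContinuousLinearMap.adjoint_inner_right]
      exact (inner_self_eq_norm_sq (𝕜 := ℂ) _).symm
    have h3 : ((inner ℂ (v i) (L (v i)) : ℂ)).re ≤ l2OpNorm T * ‖v i‖ ^ 2 := by
      calc ((inner ℂ (v i) (L (v i)) : ℂ)).re ≤ ‖(inner ℂ (v i) (L (v i)) : ℂ)‖ :=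
            Complex.re_le_norm _
        _ ≤ ‖v i‖ * ‖L (v i)‖ := norm_inner_le_norm _ _
        _ ≤ ‖v i‖ * (‖L‖ * ‖v i‖) :=
            mul_le_mul_of_nonneg_left (L.le_opNorm (v i)) (norm_nonneg _)
        _ = l2OpNorm T * ‖v i‖ ^ 2 := by simp only [l2OpNorm, hL]; ring
    calc ∑ j, ∑ k, ‖(Z * (B j)ᴴ) i k‖ ^ 2 = ((inner ℂ (v i) (L (v i)) : ℂ)).re := by
          rw [← h2]; exact Finset.sum_congr rfl fun j _ => h1 j
      _ ≤ l2OpNorm T * ‖v i‖ ^ 2 := h3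
      _ = l2OpNorm T * ∑ k, ‖Z i k‖ ^ 2 := by rw [hnormv]
  calc ∑ j, N2 (Z * (B j)ᴴ) = ∑ i, ∑ j, ∑ k, ‖(Z * (B j)ᴴ) i k‖ ^ 2 := by
        simp only [N2]; rw [Finset.sum_comm]
    _ ≤ ∑ i, l2OpNorm T * ∑ k, ‖Z i k‖ ^ 2 := Finset.sum_le_sum fun i _ => key i
    _ = l2OpNorm T * N2 Z := by rw [← Finset.mul_sum]; rfl

end CSAux

/-- Cauchy–Schwarz inequality for elementary operators on matrices, Frobenius norm version:
`‖Σ Aⱼᴴ X Bⱼ‖_F ≤ ‖Σ Bⱼᴴ Bⱼ‖_op^{1/2} · ‖(Σ Aⱼ Aⱼᴴ)^{1/2} · X‖_F`. -/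
theorem frobeniusNorm_sum_conjTranspose_mul_mul_le' {n m : ℕ}
    (A B : Fin m → Matrix (Fin n) (Fin n) ℂ) (X : Matrix (Fin n) (Fin n) ℂ) :
    frobeniusNorm (∑ j, (A j)ᴴ * X * B j) ≤
      Real.sqrt (l2OpNorm (∑ j, (B j)ᴴ * B j)) *
        frobeniusNorm ((posSemidef_sum_mul_conjTranspose A).sqrt * X) := by
  classical
  set Z := ∑ j, (A j)ᴴ * X * B j with hZ
  have h0 : CSAux.N2 Z = ∑ j, (CSAux.IP (Z * (B j)ᴴ) ((A j)ᴴ * X)).re := by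
    rw [CSAux.N2_eq_re_IP]
    conv_lhs => rw [hZ, CSAux.IP_sum_right]
    rw [Complex.re_sum]
    exact Finset.sum_congr rfl fun j _ => by rw [CSAux.IP_shift]
  have h1 := CSAux.sum_re_IP_le (fun j => Z * (B j)ᴴ) (fun j => (A j)ᴴ * X)
  have h2 := CSAux.sum_N2_right Z B
  have h3 := CSAux.sum_N2_left A X
  set c := l2OpNorm (∑ j, (B j)ᴴ * B j) with hc
  have hc0 : 0 ≤ c := norm_nonneg _
  set d := frobeniusNorm ((posSemidef_sum_mul_conjTranspose A).sqrt * X) with hd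
  have hd0 : 0 ≤ d := Real.sqrt_nonneg _
  set a := frobeniusNorm Z with ha
  have ha0 : 0 ≤ a := Real.sqrt_nonneg _
  have key : a ^ 2 ≤ Real.sqrt c * a * d := by
    have e1 : a ^ 2 = CSAux.N2 Z := Real.sq_sqrt (CSAux.N2_nonneg Z)
    rw [e1, h0]
    refine h1.trans ?_
    have e2 : Real.sqrt (∑ j, CSAux.N2 (Z * (B j)ᴴ)) ≤ Real.sqrt c * a := by
      refine (Real.sqrt_le_sqrt h2).trans ?_
      rw [Real.sqrt_mul hc0]
      exact le_of_eq rfl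
    have e3 : Real.sqrt (∑ j, CSAux.N2 ((A j)ᴴ * X)) = d := by rw [h3]; rfl
    rw [e3]
    exact mul_le_mul_of_nonneg_right e2 hd0
  rcases eq_or_lt_of_le ha0 with h | h
  · rw [← h]
    positivity
  · have : a * a ≤ (Real.sqrt c * d) * a := by
      calc a * a = a ^ 2 := (sq a).symm
        _ ≤ Real.sqrt c * a * d := key
        _ = (Real.sqrt c * d) * a := by ring
    exact le_of_mul_le_mul_right this h
end

section
/- Let n, m ∈ ℕ and let A₁,…,Aₘ, B₁,…,Bₘ, X be n×n complex matrices. Then ‖Σ_{j=1}^m Aⱼᴴ X Bⱼ‖₁ ≤ ‖(Σ_{j=1}^m Aⱼ Aⱼᴴ)^{1/2} · X · (Σ_{j=1}^m Bⱼ Bⱼᴴ)^{1/2}‖₁, where ‖M‖₁ = tr((MᴴM)^{1/2}) is the trace norm. -/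
open Matrix
open scoped ComplexOrder

/-- The positive semidefinite square root of a positive semidefinite matrix, as defined in
Mathlib (December 2024) under the name `Matrix.PosSemidef.sqrt`, which has since been removed. -/
noncomputable def posSemidefSqrt {n : ℕ} {A : Matrix (Fin n) (Fin n) ℂ} (hA : A.PosSemidef) :
    Matrix (Fin n) (Fin n) ℂ :=
  (hA.1.eigenvectorUnitary : Matrix (Fin n) (Fin n) ℂ) *
    diagonal ((↑) ∘ Real.sqrt ∘ hA.1.eigenvalues) *
    (star (hA.1.eigenvectorUnitary : Matrix (Fin n) (Fin n) ℂ))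

/-- The trace norm of a complex matrix: `‖M‖₁ = tr((MᴴM)^{1/2})`. -/
noncomputable def traceNorm {n : ℕ} (M : Matrix (Fin n) (Fin n) ℂ) : ℝ :=
  ((posSemidefSqrt (Matrix.posSemidef_conjTranspose_mul_self M)).trace).re

namespace TNAux

variable {n : ℕ}





/-- squared Euclidean norm of a complex vector -/
noncomputable def nsq (x : Fin n → ℂ) : ℝ := ∑ i, Complex.normSq (x i)

lemma nsq_nonneg (x : Fin n → ℂ) : 0 ≤ nsq x :=
  Finset.sum_nonneg fun i _ => Complex.normSq_nonneg _

/-- Euclidean norm -/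
noncomputable def nrm (x : Fin n → ℂ) : ℝ := Real.sqrt (nsq x)

lemma nrm_nonneg (x : Fin n → ℂ) : 0 ≤ nrm x := Real.sqrt_nonneg _

lemma nrm_sq (x : Fin n → ℂ) : nrm x ^ 2 = nsq x := Real.sq_sqrt (nsq_nonneg x)

lemma star_dot_self (x : Fin n → ℂ) : star x ⬝ᵥ x = (nsq x : ℂ) := by
  simp only [dotProduct, nsq, Pi.star_apply, Complex.ofReal_sum]
  refine Finset.sum_congr rfl fun i _ => ?_
  rw [Complex.normSq_eq_conj_mul_self]
  rfl

lemma nrm_eq_norm (x : Fin n → ℂ) :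
    nrm x = ‖(WithLp.equiv 2 (Fin n → ℂ)).symm x‖ := by
  rw [EuclideanSpace.norm_eq, nrm, nsq]
  congr 1
  refine Finset.sum_congr rfl fun i _ => ?_
  rw [← Complex.sq_norm]
  rfl

/-- Cauchy–Schwarz for complex dot products. -/
lemma cs (x y : Fin n → ℂ) : ‖star x ⬝ᵥ y‖ ≤ nrm x * nrm y := by
  have := norm_inner_le_norm (𝕜 := ℂ)
    ((WithLp.equiv 2 (Fin n → ℂ)).symm x) ((WithLp.equiv 2 (Fin n → ℂ)).symm y)
  rw [show inner ℂ ((WithLp.equiv 2 (Fin n → ℂ)).symm x) ((WithLp.equiv 2 (Fin n → ℂ)).symm y)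
    = star x ⬝ᵥ y from dotProduct_comm _ _] at this
  rw [nrm_eq_norm, nrm_eq_norm]
  exact this

lemma star_mulVec_dot (A : Matrix (Fin n) (Fin n) ℂ) (x y : Fin n → ℂ) :
    star (A *ᵥ x) ⬝ᵥ y = star x ⬝ᵥ (Aᴴ *ᵥ y) := by
  rw [star_mulVec, dotProduct_mulVec]

variable {P : Matrix (Fin n) (Fin n) ℂ}


/-- conjugation of a real diagonal by the eigenvector unitary of `P` -/
noncomputable def cd (hP : P.PosSemidef) (f : Fin n → ℝ) : Matrix (Fin n) (Fin n) ℂ :=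
  (hP.1.eigenvectorUnitary : Matrix (Fin n) (Fin n) ℂ) * diagonal (Complex.ofReal ∘ f) *
    (star (hP.1.eigenvectorUnitary : Matrix (Fin n) (Fin n) ℂ))

lemma cd_mul (hP : P.PosSemidef) (f g : Fin n → ℝ) :
    cd hP f * cd hP g = cd hP (f * g) := by
  unfold cd
  have h1 : (star (hP.1.eigenvectorUnitary : Matrix (Fin n) (Fin n) ℂ)) *
      (hP.1.eigenvectorUnitary : Matrix (Fin n) (Fin n) ℂ) = 1 :=
    (Matrix.mem_unitaryGroup_iff').mp hP.1.eigenvectorUnitary.2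
  simp only [mul_assoc]
  rw [← mul_assoc (star (hP.1.eigenvectorUnitary : Matrix (Fin n) (Fin n) ℂ))
    (hP.1.eigenvectorUnitary : Matrix (Fin n) (Fin n) ℂ), h1, one_mul,
    ← mul_assoc (diagonal (Complex.ofReal ∘ f)), diagonal_mul_diagonal]
  have hfg : (fun i => (Complex.ofReal ∘ f) i * (Complex.ofReal ∘ g) i)
      = Complex.ofReal ∘ (f * g) := by
    ext i; simp
  rw [hfg]

lemma cd_self (hP : P.PosSemidef) : cd hP hP.1.eigenvalues = P :=
  (hP.1.spectral_theorem).symm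

lemma cd_one (hP : P.PosSemidef) : cd hP 1 = 1 := by
  unfold cd
  have h1 : (hP.1.eigenvectorUnitary : Matrix (Fin n) (Fin n) ℂ) *
      (star (hP.1.eigenvectorUnitary : Matrix (Fin n) (Fin n) ℂ)) = 1 :=
    (Matrix.mem_unitaryGroup_iff).mp hP.1.eigenvectorUnitary.2
  have : diagonal (Complex.ofReal ∘ (1 : Fin n → ℝ)) = 1 := by
    have : Complex.ofReal ∘ (1 : Fin n → ℝ) = fun _ => 1 := by ext i; simp
    rw [this, diagonal_one]
  rw [this, mul_one, h1]

lemma cd_conjTranspose (hP : P.PosSemidef) (f : Fin n → ℝ) : (cd hP f)ᴴ = cd hP f := by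
  unfold cd
  have hd : (diagonal (Complex.ofReal ∘ f))ᴴ = diagonal (Complex.ofReal ∘ f) := by
    have hs : star (Complex.ofReal ∘ f) = Complex.ofReal ∘ f := by
      funext i
      simp [Complex.conj_ofReal]
    rw [diagonal_conjTranspose, hs]
  simp only [star_eq_conjTranspose, conjTranspose_mul, conjTranspose_conjTranspose, hd, mul_assoc]

lemma cd_posSemidef (hP : P.PosSemidef) {f : Fin n → ℝ} (hf : ∀ i, 0 ≤ f i) :
    (cd hP f).PosSemidef := by
  unfold cd
  rw [mul_assoc]
  have hd : (diagonal (Complex.ofReal ∘ f)).PosSemidef := by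
    refine posSemidef_diagonal_iff.mpr fun i => ?_
    simpa using Complex.zero_le_real.mpr (hf i)
  have := hd.mul_mul_conjTranspose_same (hP.1.eigenvectorUnitary : Matrix (Fin n) (Fin n) ℂ)
  simpa [star_eq_conjTranspose, mul_assoc] using this

lemma sqrt_eq_cd (hP : P.PosSemidef) : posSemidefSqrt hP = cd hP (Real.sqrt ∘ hP.1.eigenvalues) :=
  rfl

lemma posSemidefSqrt_posSemidef (hP : P.PosSemidef) : (posSemidefSqrt hP).PosSemidef := by
  rw [sqrt_eq_cd]
  exact cd_posSemidef hP fun i => Real.sqrt_nonneg _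

lemma posSemidefSqrt_mul_self (hP : P.PosSemidef) : posSemidefSqrt hP * posSemidefSqrt hP = P := by
  rw [sqrt_eq_cd, cd_mul]
  conv_rhs => rw [← cd_self hP]
  refine congrArg (cd hP) ?_
  funext i
  exact Real.mul_self_sqrt (hP.eigenvalues_nonneg i)

lemma cd_congr (hP : P.PosSemidef) {f g : Fin n → ℝ} (h : f = g) : cd hP f = cd hP g := by rw [h]

lemma cd_sub (hP : P.PosSemidef) (f g : Fin n → ℝ) :
    cd hP f - cd hP g = cd hP (f - g) := by
  unfold cd
  have hd : diagonal (Complex.ofReal ∘ f) - diagonal (Complex.ofReal ∘ g)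
      = diagonal (Complex.ofReal ∘ (f - g)) := by
    have hfun : Complex.ofReal ∘ (f - g) = (Complex.ofReal ∘ f) - (Complex.ofReal ∘ g) := by
      funext i; simp
    rw [hfun, diagonal_sub]
    rfl
  rw [← sub_mul, ← mul_sub, hd]

lemma cd_zero (hP : P.PosSemidef) : cd hP 0 = 0 := by
  unfold cd
  have : diagonal (Complex.ofReal ∘ (0 : Fin n → ℝ)) = 0 := by
    have : Complex.ofReal ∘ (0 : Fin n → ℝ) = fun _ => 0 := by funext i; simp
    rw [this, diagonal_zero]
  rw [this, mul_zero, zero_mul]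

lemma one_sub_cd (hP : P.PosSemidef) (f : Fin n → ℝ) : 1 - cd hP f = cd hP (1 - f) := by
  rw [← cd_one hP, cd_sub]

/-- If a sum of `N j * (N j)ᴴ` is zero, each `N j` is zero. -/
lemma eq_zero_of_sum_mul_conjTranspose_eq_zero {m : ℕ} {N : Fin m → Matrix (Fin n) (Fin n) ℂ}
    (h : ∑ j, N j * (N j)ᴴ = 0) (j : Fin m) : N j = 0 := by
  ext i k
  have hdiag : (∑ j, N j * (N j)ᴴ) i i = 0 := by rw [h]; rfl
  rw [Matrix.sum_apply] at hdiag
  have hterm : ∀ j, (N j * (N j)ᴴ) i i = ((∑ k, Complex.normSq (N j i k) : ℝ) : ℂ) := by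
    intro j
    rw [Matrix.mul_apply]
    rw [Complex.ofReal_sum]
    refine Finset.sum_congr rfl fun k _ => ?_
    rw [conjTranspose_apply, Complex.star_def, Complex.mul_conj]
  simp only [hterm] at hdiag
  rw [← Complex.ofReal_sum] at hdiag
  have hreal : (∑ j, ∑ k, Complex.normSq (N j i k)) = 0 := by exact_mod_cast hdiag
  have h1 : ∀ j ∈ Finset.univ, (0:ℝ) ≤ ∑ k, Complex.normSq (N j i k) :=
    fun j _ => Finset.sum_nonneg fun k _ => Complex.normSq_nonneg _
  have h2 := (Finset.sum_eq_zero_iff_of_nonneg h1).mp hreal j (Finset.mem_univ j)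
  have h3 := (Finset.sum_eq_zero_iff_of_nonneg
    (fun k _ => Complex.normSq_nonneg (N j i k))).mp h2 k (Finset.mem_univ k)
  exact Complex.normSq_eq_zero.mp h3



section contraction

variable {K L : Matrix (Fin n) (Fin n) ℂ}

lemma quad_le_of_one_sub_psd {A : Matrix (Fin n) (Fin n) ℂ} (h : (1 - A).PosSemidef)
    (x : Fin n → ℂ) : (star x ⬝ᵥ (A *ᵥ x)).re ≤ nsq x := by
  have h0 : (0:ℂ) ≤ star x ⬝ᵥ ((1 - A) *ᵥ x) := h.dotProduct_mulVec_nonneg x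
  have h1 : (0:ℝ) ≤ (star x ⬝ᵥ ((1 - A) *ᵥ x)).re := (Complex.le_def.mp h0).1
  rw [sub_mulVec, one_mulVec, dotProduct_sub, star_dot_self] at h1
  rw [Complex.sub_re, Complex.ofReal_re] at h1
  linarith

lemma nsq_mulVec_eq (K : Matrix (Fin n) (Fin n) ℂ) (x : Fin n → ℂ) :
    (nsq (K *ᵥ x) : ℂ) = star x ⬝ᵥ ((Kᴴ * K) *ᵥ x) := by
  rw [← star_dot_self, star_mulVec_dot, mulVec_mulVec]

/-- contraction predicate -/
def Con (K : Matrix (Fin n) (Fin n) ℂ) : Prop := ∀ x, nrm (K *ᵥ x) ≤ nrm x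

lemma Con.nsq_le (hK : Con K) (x : Fin n → ℂ) : nsq (K *ᵥ x) ≤ nsq x := by
  rw [← nrm_sq, ← nrm_sq]
  exact pow_le_pow_left₀ (nrm_nonneg _) (hK x) 2

lemma con_of_psd (h : (1 - Kᴴ * K).PosSemidef) : Con K := by
  intro x
  have h1 : nsq (K *ᵥ x) ≤ nsq x := by
    have := quad_le_of_one_sub_psd h x
    rw [← nsq_mulVec_eq, Complex.ofReal_re] at this
    exact this
  exact Real.sqrt_le_sqrt h1

lemma Con.mul (hK : Con K) (hL : Con L) : Con (K * L) := fun x => by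
  rw [← mulVec_mulVec]
  exact le_trans (hK _) (hL x)

lemma re_le_nrm_mul_nrm (x y : Fin n → ℂ) : (star x ⬝ᵥ y).re ≤ nrm x * nrm y :=
  le_trans (Complex.re_le_norm _) (cs x y)

lemma Con.conjTranspose (hK : Con K) : Con Kᴴ := by
  intro y
  have h1 : nsq (Kᴴ *ᵥ y) = (star y ⬝ᵥ (K *ᵥ (Kᴴ *ᵥ y))).re := by
    have : (nsq (Kᴴ *ᵥ y) : ℂ) = star y ⬝ᵥ (K *ᵥ (Kᴴ *ᵥ y)) := by
      rw [← star_dot_self, star_mulVec_dot, conjTranspose_conjTranspose]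
    rw [← this, Complex.ofReal_re]
  have h2 : nsq (Kᴴ *ᵥ y) ≤ nrm y * nrm (Kᴴ *ᵥ y) := by
    rw [h1]
    exact le_trans (re_le_nrm_mul_nrm _ _)
      (mul_le_mul_of_nonneg_left (hK _) (nrm_nonneg _))
  rcases eq_or_lt_of_le (nrm_nonneg (Kᴴ *ᵥ y)) with h | h
  · rw [← h]; exact nrm_nonneg y
  · have h3 := h2
    rw [← nrm_sq, pow_two] at h3
    exact le_of_mul_le_mul_right h3 h

lemma dotProduct_sum' {m : ℕ} (v : Fin n → ℂ) (w : Fin m → Fin n → ℂ) :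
    v ⬝ᵥ (∑ j, w j) = ∑ j, v ⬝ᵥ w j := by
  simp only [dotProduct, Finset.sum_apply, Finset.mul_sum]
  exact Finset.sum_comm

lemma sum_mulVec' {m : ℕ} (M : Fin m → Matrix (Fin n) (Fin n) ℂ) (x : Fin n → ℂ) :
    (∑ j, M j) *ᵥ x = ∑ j, M j *ᵥ x := by
  funext i
  simp only [mulVec, dotProduct, Matrix.sum_apply, Finset.sum_apply, Finset.sum_mul]
  exact Finset.sum_comm

lemma con_sum {m : ℕ} {C D : Fin m → Matrix (Fin n) (Fin n) ℂ}
    {W : Matrix (Fin n) (Fin n) ℂ}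
    (hC : ∀ x, ∑ j, nsq ((C j)ᴴ *ᵥ x) ≤ nsq x)
    (hD : ∀ x, ∑ j, nsq ((D j)ᴴ *ᵥ x) ≤ nsq x)
    (hW : Con W) : Con (∑ j, D j * W * (C j)ᴴ) := by
  set K := ∑ j, D j * W * (C j)ᴴ with hKdef
  have key : ∀ x u : Fin n → ℂ, (star u ⬝ᵥ (K *ᵥ x)).re ≤ nrm u * nrm x := by
    intro x u
    have expand : star u ⬝ᵥ (K *ᵥ x)
        = ∑ j, star ((D j)ᴴ *ᵥ u) ⬝ᵥ (W *ᵥ ((C j)ᴴ *ᵥ x)) := by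
      rw [hKdef, sum_mulVec', dotProduct_sum']
      refine Finset.sum_congr rfl fun j _ => ?_
      rw [star_mulVec_dot, conjTranspose_conjTranspose, ← mulVec_mulVec, ← mulVec_mulVec]
    rw [expand]
    calc (∑ j, star ((D j)ᴴ *ᵥ u) ⬝ᵥ (W *ᵥ ((C j)ᴴ *ᵥ x))).re
        = ∑ j, (star ((D j)ᴴ *ᵥ u) ⬝ᵥ (W *ᵥ ((C j)ᴴ *ᵥ x))).re := by
          rw [Complex.re_sum]
      _ ≤ ∑ j, nrm ((D j)ᴴ *ᵥ u) * nrm ((C j)ᴴ *ᵥ x) := by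
          refine Finset.sum_le_sum fun j _ => ?_
          exact le_trans (re_le_nrm_mul_nrm _ _)
            (mul_le_mul_of_nonneg_left (hW _) (nrm_nonneg _))
      _ ≤ Real.sqrt (∑ j, nrm ((D j)ᴴ *ᵥ u) ^ 2) * Real.sqrt (∑ j, nrm ((C j)ᴴ *ᵥ x) ^ 2) :=
          Real.sum_mul_le_sqrt_mul_sqrt _ _ _
      _ ≤ nrm u * nrm x := by
          simp only [nrm_sq]
          exact mul_le_mul (Real.sqrt_le_sqrt (hD u)) (Real.sqrt_le_sqrt (hC x))
            (Real.sqrt_nonneg _) (nrm_nonneg _)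
  intro x
  have h := key x (K *ᵥ x)
  have he : (star (K *ᵥ x) ⬝ᵥ (K *ᵥ x)).re = nsq (K *ᵥ x) := by
    rw [star_dot_self, Complex.ofReal_re]
  rw [he] at h
  rcases eq_or_lt_of_le (nrm_nonneg (K *ᵥ x)) with h0 | h0
  · rw [← h0]; exact nrm_nonneg x
  · rw [← nrm_sq, pow_two] at h
    exact (mul_le_mul_iff_right₀ h0).mp h

end contraction


section tracebound

/-- For PSD `R` and contraction `K`, `Re tr(K R) ≤ Re tr R`. -/
lemma re_trace_mul_le {K R : Matrix (Fin n) (Fin n) ℂ} (hR : R.PosSemidef) (hK : Con K) :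
    (Matrix.trace (K * R)).re ≤ (Matrix.trace R).re := by
  have hG : posSemidefSqrt hR * posSemidefSqrt hR = R := posSemidefSqrt_mul_self hR
  set G := posSemidefSqrt hR with hGdef
  have hGh : Gᴴ = G := (posSemidefSqrt_posSemidef hR).1
  have h1 : Matrix.trace (K * R) = Matrix.trace (G * K * G) := by
    rw [← hG, ← mul_assoc, Matrix.trace_mul_comm (K * G) G, ← mul_assoc]
  have hentry : ∀ i, ((G * K * G) i i).re ≤ (R i i).re := by
    intro i
    set g : Fin n → ℂ := fun a => G a i with hgdef
    have e1 : (G * K * G) i i = star g ⬝ᵥ (K *ᵥ g) := by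
      rw [mul_assoc, Matrix.mul_apply]
      refine Finset.sum_congr rfl fun a _ => ?_
      have hGa : G i a = star (g a) := by
        rw [hgdef]
        conv_lhs => rw [← hGh]
        rw [conjTranspose_apply]
      rw [hGa, Matrix.mul_apply]
      rfl
    have e2 : R i i = star g ⬝ᵥ g := by
      rw [← hG, Matrix.mul_apply]
      refine Finset.sum_congr rfl fun a _ => ?_
      have hGa : G i a = star (g a) := by
        rw [hgdef]
        conv_lhs => rw [← hGh]
        rw [conjTranspose_apply]
      rw [hGa]
      rfl
    rw [e1, e2]
    have h3 : (star g ⬝ᵥ (K *ᵥ g)).re ≤ nrm g * nrm (K *ᵥ g) := re_le_nrm_mul_nrm _ _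
    have h4 : nrm g * nrm (K *ᵥ g) ≤ nrm g * nrm g :=
      mul_le_mul_of_nonneg_left (hK g) (nrm_nonneg g)
    have h5 : (star g ⬝ᵥ g).re = nrm g * nrm g := by
      rw [star_dot_self, Complex.ofReal_re, ← Real.mul_self_sqrt (nsq_nonneg g)]
      rfl
    rw [h5]
    exact le_trans h3 h4
  rw [h1, Matrix.trace, Matrix.trace, Complex.re_sum, Complex.re_sum]
  exact Finset.sum_le_sum fun i _ => hentry i

end tracebound

section polar

section generic

variable {S T : Matrix (Fin n) (Fin n) ℂ}

lemma real_id1 (μ : Fin n → ℝ) : (1 - μ⁻¹ * μ) * (μ * μ) * (1 - μ⁻¹ * μ) = 0 := by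
  funext i
  simp only [Pi.mul_apply, Pi.sub_apply, Pi.inv_apply, Pi.one_apply, Pi.zero_apply]
  by_cases h : μ i = 0
  · simp [h]
  · field_simp
    simp

lemma real_id2 (μ : Fin n → ℝ) : μ⁻¹ * (μ * μ) = μ := by
  funext i
  simp only [Pi.mul_apply, Pi.inv_apply]
  by_cases h : μ i = 0
  · simp [h]
  · field_simp

lemma real_id3 (μ : Fin n → ℝ) (i : Fin n) : 0 ≤ (1 - μ⁻¹ * (μ * μ) * μ⁻¹) i := by
  simp only [Pi.sub_apply, Pi.mul_apply, Pi.inv_apply, Pi.one_apply]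
  by_cases h : μ i = 0
  · simp [h]
  · have : (μ i)⁻¹ * (μ i * μ i) * (μ i)⁻¹ = 1 := by field_simp
    rw [this]
    norm_num

lemma real_id4 (μ : Fin n → ℝ) : (μ⁻¹ * μ) * (μ⁻¹ * μ) = μ⁻¹ * μ := by
  funext i
  simp only [Pi.mul_apply, Pi.inv_apply]
  by_cases h : μ i = 0
  · simp [h]
  · field_simp

/-- `1 - pinv ∘ sq ∘ pinv` is PSD -/
lemma psd_one_sub_q (hT : T.PosSemidef) :
    (1 - cd hT ((hT.1.eigenvalues)⁻¹ * (hT.1.eigenvalues * hT.1.eigenvalues) *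
      (hT.1.eigenvalues)⁻¹)).PosSemidef := by
  rw [one_sub_cd]
  exact cd_posSemidef hT fun i => real_id3 _ i

lemma gen_sq (hT : T.PosSemidef) :
    T * T = cd hT (hT.1.eigenvalues * hT.1.eigenvalues) := by
  conv_lhs => rw [← cd_self hT]
  rw [cd_mul]

lemma gen_pv_mul (hT : T.PosSemidef) (hTS : T * T = Sᴴ * S) :
    (S * cd hT (hT.1.eigenvalues)⁻¹) * T = S := by
  set μ := hT.1.eigenvalues with hμ
  have hSS : Sᴴ * S = cd hT (μ * μ) := by rw [← hTS, gen_sq hT]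
  have hzero : S * cd hT (1 - μ⁻¹ * μ) = 0 := by
    have hNN : (S * cd hT (1 - μ⁻¹ * μ))ᴴ * (S * cd hT (1 - μ⁻¹ * μ)) = 0 := by
      rw [conjTranspose_mul, cd_conjTranspose]
      calc cd hT (1 - μ⁻¹ * μ) * Sᴴ * (S * cd hT (1 - μ⁻¹ * μ))
          = cd hT (1 - μ⁻¹ * μ) * (Sᴴ * S) * cd hT (1 - μ⁻¹ * μ) := by
            rw [mul_assoc, mul_assoc, mul_assoc]
        _ = cd hT (1 - μ⁻¹ * μ) * cd hT (μ * μ) * cd hT (1 - μ⁻¹ * μ) := by rw [hSS]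
        _ = cd hT ((1 - μ⁻¹ * μ) * (μ * μ) * (1 - μ⁻¹ * μ)) := by rw [cd_mul, cd_mul]
        _ = 0 := by rw [real_id1, cd_zero]
    exact conjTranspose_mul_self_eq_zero.mp hNN
  have h2 : S * cd hT (μ⁻¹ * μ) = S := by
    rw [← one_sub_cd hT, mul_sub, mul_one, sub_eq_zero] at hzero
    exact hzero.symm
  have hq' : cd hT μ⁻¹ * T = cd hT (μ⁻¹ * μ) := by
    have h := cd_mul hT μ⁻¹ μ
    rwa [cd_self hT] at h
  calc (S * cd hT μ⁻¹) * T = S * (cd hT μ⁻¹ * T) := by rw [mul_assoc]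
    _ = S * cd hT (μ⁻¹ * μ) := by rw [hq']
    _ = S := h2

lemma gen_pv_conj_mul (hT : T.PosSemidef) (hTS : T * T = Sᴴ * S) :
    (S * cd hT (hT.1.eigenvalues)⁻¹)ᴴ * S = T := by
  set μ := hT.1.eigenvalues with hμ
  have hSS : Sᴴ * S = cd hT (μ * μ) := by rw [← hTS, gen_sq hT]
  rw [conjTranspose_mul, cd_conjTranspose, mul_assoc]
  rw [hSS, cd_mul, real_id2]
  exact cd_self hT

lemma gen_pv_con (hT : T.PosSemidef) (hTS : T * T = Sᴴ * S) :
    Con (S * cd hT (hT.1.eigenvalues)⁻¹) := by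
  set μ := hT.1.eigenvalues with hμ
  have hSS : Sᴴ * S = cd hT (μ * μ) := by rw [← hTS, gen_sq hT]
  apply con_of_psd
  have h1 : (S * cd hT μ⁻¹)ᴴ * (S * cd hT μ⁻¹) = cd hT (μ⁻¹ * (μ * μ) * μ⁻¹) := by
    rw [conjTranspose_mul, cd_conjTranspose]
    calc cd hT μ⁻¹ * Sᴴ * (S * cd hT μ⁻¹)
        = cd hT μ⁻¹ * (Sᴴ * S) * cd hT μ⁻¹ := by rw [mul_assoc, mul_assoc, mul_assoc]
      _ = cd hT μ⁻¹ * cd hT (μ * μ) * cd hT μ⁻¹ := by rw [hSS]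
      _ = cd hT (μ⁻¹ * (μ * μ) * μ⁻¹) := by rw [cd_mul, cd_mul]
  rw [h1]
  exact psd_one_sub_q hT

end generic

variable (S : Matrix (Fin n) (Fin n) ℂ)

noncomputable def absm : Matrix (Fin n) (Fin n) ℂ := posSemidefSqrt (posSemidef_conjTranspose_mul_self S)

lemma absm_posSemidef : (absm S).PosSemidef :=
  posSemidefSqrt_posSemidef (posSemidef_conjTranspose_mul_self S)

lemma absm_mul_self : absm S * absm S = Sᴴ * S :=
  posSemidefSqrt_mul_self (posSemidef_conjTranspose_mul_self S)

/-- the (partial isometry part of the) polar decomposition of `S` -/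
noncomputable def pv : Matrix (Fin n) (Fin n) ℂ :=
  S * cd (absm_posSemidef S) ((absm_posSemidef S).1.eigenvalues)⁻¹

lemma pv_mul_absm : pv S * absm S = S :=
  gen_pv_mul (absm_posSemidef S) (absm_mul_self S)

lemma pv_conjTranspose_mul : (pv S)ᴴ * S = absm S :=
  gen_pv_conj_mul (absm_posSemidef S) (absm_mul_self S)

lemma pv_con : Con (pv S) :=
  gen_pv_con (absm_posSemidef S) (absm_mul_self S)

end polar


section fact

variable {m : ℕ}

lemma gen_sum_conj (A : Fin m → Matrix (Fin n) (Fin n) ℂ) {P : Matrix (Fin n) (Fin n) ℂ}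
    (hP : P.PosSemidef) (f : Fin n → ℝ) :
    ∑ j, (cd hP f * A j) * (cd hP f * A j)ᴴ
      = cd hP f * (∑ j, A j * (A j)ᴴ) * cd hP f := by
  rw [Finset.mul_sum, Finset.sum_mul]
  refine Finset.sum_congr rfl fun j _ => ?_
  rw [conjTranspose_mul, cd_conjTranspose]
  noncomm_ring

lemma gen_fact_eq (A : Fin m → Matrix (Fin n) (Fin n) ℂ) {P : Matrix (Fin n) (Fin n) ℂ}
    (hP : P.PosSemidef) (hPP : P * P = ∑ j, A j * (A j)ᴴ) (j : Fin m) :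
    P * (cd hP (hP.1.eigenvalues)⁻¹ * A j) = A j := by
  set ν := hP.1.eigenvalues with hν
  have hsum : ∑ j, (cd hP (1 - ν⁻¹ * ν) * A j) * (cd hP (1 - ν⁻¹ * ν) * A j)ᴴ = 0 := by
    rw [gen_sum_conj A hP, ← hPP, gen_sq hP, cd_mul, cd_mul, real_id1, cd_zero]
  have hz := eq_zero_of_sum_mul_conjTranspose_eq_zero hsum j
  have hAj : cd hP (ν⁻¹ * ν) * A j = A j := by
    rw [← one_sub_cd hP, sub_mul, one_mul, sub_eq_zero] at hz
    exact hz.symm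
  have hq' : P * cd hP ν⁻¹ = cd hP (ν⁻¹ * ν) := by
    have h := cd_mul hP ν ν⁻¹
    rw [cd_self hP] at h
    rw [h, mul_comm ν ν⁻¹]
  rw [← mul_assoc, hq', hAj]

lemma gen_fact_nsq (A : Fin m → Matrix (Fin n) (Fin n) ℂ) {P : Matrix (Fin n) (Fin n) ℂ}
    (hP : P.PosSemidef) (hPP : P * P = ∑ j, A j * (A j)ᴴ) (x : Fin n → ℂ) :
    ∑ j, nsq ((cd hP (hP.1.eigenvalues)⁻¹ * A j)ᴴ *ᵥ x) ≤ nsq x := by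
  set ν := hP.1.eigenvalues with hν
  have hsum : ∑ j, (cd hP ν⁻¹ * A j) * (cd hP ν⁻¹ * A j)ᴴ
      = cd hP (ν⁻¹ * (ν * ν) * ν⁻¹) := by
    rw [gen_sum_conj A hP, ← hPP, gen_sq hP, cd_mul, cd_mul]
  have hterm : ∀ j, (nsq ((cd hP ν⁻¹ * A j)ᴴ *ᵥ x) : ℂ)
      = star x ⬝ᵥ (((cd hP ν⁻¹ * A j) * (cd hP ν⁻¹ * A j)ᴴ) *ᵥ x) := by
    intro j
    rw [nsq_mulVec_eq, conjTranspose_conjTranspose]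
  have hcast : ((∑ j, nsq ((cd hP ν⁻¹ * A j)ᴴ *ᵥ x) : ℝ) : ℂ)
      = star x ⬝ᵥ (cd hP (ν⁻¹ * (ν * ν) * ν⁻¹) *ᵥ x) := by
    rw [Complex.ofReal_sum]
    simp_rw [hterm]
    rw [← dotProduct_sum', ← sum_mulVec', hsum]
  have hre : ∑ j, nsq ((cd hP ν⁻¹ * A j)ᴴ *ᵥ x)
      = (star x ⬝ᵥ (cd hP (ν⁻¹ * (ν * ν) * ν⁻¹) *ᵥ x)).re := by
    rw [← hcast, Complex.ofReal_re]
  rw [hre]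
  exact quad_le_of_one_sub_psd (psd_one_sub_q hP) x

end fact



section main

lemma main_aux2 {m : ℕ} (A B C D : Fin m → Matrix (Fin n) (Fin n) ℂ)
    (X : Matrix (Fin n) (Fin n) ℂ) {P Q : Matrix (Fin n) (Fin n) ℂ}
    (hPh : Pᴴ = P)
    (hPC : ∀ j, P * C j = A j) (hQD : ∀ j, Q * D j = B j)
    (hCn : ∀ x, ∑ j, nsq ((C j)ᴴ *ᵥ x) ≤ nsq x)
    (hDn : ∀ x, ∑ j, nsq ((D j)ᴴ *ᵥ x) ≤ nsq x) :
    ((absm (∑ j, (A j)ᴴ * X * B j)).trace).re ≤ ((absm (P * X * Q)).trace).re := by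
  set S : Matrix (Fin n) (Fin n) ℂ := ∑ j, (A j)ᴴ * X * B j with hS
  set M : Matrix (Fin n) (Fin n) ℂ := P * X * Q with hM
  have hCP : ∀ j, (C j)ᴴ * P = (A j)ᴴ := by
    intro j
    calc (C j)ᴴ * P = (Pᴴ * C j)ᴴ := by rw [conjTranspose_mul, conjTranspose_conjTranspose]
      _ = (P * C j)ᴴ := by rw [hPh]
      _ = (A j)ᴴ := by rw [hPC j]
  have hSrepr : S = ∑ j, (C j)ᴴ * M * D j := by
    rw [hS]
    refine Finset.sum_congr rfl fun j _ => ?_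
    calc (A j)ᴴ * X * B j = ((C j)ᴴ * P) * X * (Q * D j) := by rw [hCP j, hQD j]
      _ = (C j)ᴴ * M * D j := by rw [hM]; noncomm_ring
  set K : Matrix (Fin n) (Fin n) ℂ := ∑ j, D j * (pv S)ᴴ * (C j)ᴴ with hK
  have htr1 : (absm S).trace = ((pv S)ᴴ * S).trace := by rw [pv_conjTranspose_mul]
  have htr2 : ((pv S)ᴴ * S).trace = (K * M).trace := by
    nth_rewrite 2 [hSrepr]
    rw [Finset.mul_sum, trace_sum, hK, Finset.sum_mul, trace_sum]
    refine Finset.sum_congr rfl fun j _ => ?_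
    rw [show (pv S)ᴴ * ((C j)ᴴ * M * D j) = ((pv S)ᴴ * (C j)ᴴ * M) * D j by noncomm_ring,
      Matrix.trace_mul_comm]
    congr 1
    noncomm_ring
  have hKcon : Con K := by
    rw [hK]
    exact con_sum hCn hDn (pv_con S).conjTranspose
  have htr3 : (K * M).trace = ((K * pv M) * absm M).trace := by
    conv_lhs => rw [← pv_mul_absm M]
    rw [mul_assoc]
  have hfin : (((K * pv M) * absm M).trace).re ≤ ((absm M).trace).re :=
    re_trace_mul_le (absm_posSemidef M) (hKcon.mul (pv_con M))
  calc ((absm S).trace).re = (((K * pv M) * absm M).trace).re := by rw [htr1, htr2, htr3]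
    _ ≤ ((absm M).trace).re := hfin

lemma main_aux {m : ℕ} (A B : Fin m → Matrix (Fin n) (Fin n) ℂ)
    (X : Matrix (Fin n) (Fin n) ℂ) {P Q : Matrix (Fin n) (Fin n) ℂ}
    (hP : P.PosSemidef) (hPP : P * P = ∑ j, A j * (A j)ᴴ)
    (hQ : Q.PosSemidef) (hQQ : Q * Q = ∑ j, B j * (B j)ᴴ) :
    ((absm (∑ j, (A j)ᴴ * X * B j)).trace).re ≤ ((absm (P * X * Q)).trace).re :=
  main_aux2 A B (fun j => cd hP (hP.1.eigenvalues)⁻¹ * A j)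
    (fun j => cd hQ (hQ.1.eigenvalues)⁻¹ * B j) X hP.1.eq
    (fun j => gen_fact_eq A hP hPP j) (fun j => gen_fact_eq B hQ hQQ j)
    (fun x => gen_fact_nsq A hP hPP x) (fun x => gen_fact_nsq B hQ hQQ x)

end main

end TNAux

/-- Cauchy–Schwarz inequality for elementary operators on matrices, trace norm version:
`‖Σ Aⱼᴴ X Bⱼ‖₁ ≤ ‖(Σ Aⱼ Aⱼᴴ)^{1/2} · X · (Σ Bⱼ Bⱼᴴ)^{1/2}‖₁`. -/
theorem traceNorm_sum_conjTranspose_mul_mul_le {n m : ℕ}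
    (A B : Fin m → Matrix (Fin n) (Fin n) ℂ) (X : Matrix (Fin n) (Fin n) ℂ) :
    traceNorm (∑ j, (A j)ᴴ * X * B j) ≤
      traceNorm (posSemidefSqrt (posSemidef_sum_mul_conjTranspose A) * X *
        posSemidefSqrt (posSemidef_sum_mul_conjTranspose B)) := by
  exact TNAux.main_aux A B X
    (TNAux.posSemidefSqrt_posSemidef (posSemidef_sum_mul_conjTranspose A))
    (TNAux.posSemidefSqrt_mul_self (posSemidef_sum_mul_conjTranspose A))
    (TNAux.posSemidefSqrt_posSemidef (posSemidef_sum_mul_conjTranspose B))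
    (TNAux.posSemidefSqrt_mul_self (posSemidef_sum_mul_conjTranspose B))
end
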